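/- Let R be a ring and I a two-sided ideal of R with I ⊆ P(R). If the quotient ring R/I is almost Armendariz, then R is almost Armendariz. -/

import Mathlib

/-- An element `a` of a ring `R` is *strongly nilpotent* if every sequence
`a₀ = a`, `aₙ₊₁ ∈ aₙ R aₙ` is eventually zero. -/
def IsStronglyNilpotent {R : Type*} [Ring R] (a : R) : Prop :=
  ∀ s : ℕ → R, s 0 = a → (∀ n : ℕ, ∃ r : R, s (n + 1) = s n * r * s n) → ∃ n : ℕ, s n = 0

/-- The prime radical `P(R)` of a ring `R`: the intersection of all prime two-sided
ideals of `R`, equivalently the set of strongly nilpotent elements of `R`. -/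
def primeRadical (R : Type*) [Ring R] : Set R :=
  {a : R | IsStronglyNilpotent a}

/-- A ring `R` is *almost Armendariz* if whenever `f, g ∈ R[x]` satisfy `f g = 0`, every
product of a coefficient of `f` with a coefficient of `g` lies in the prime radical `P(R)`. -/
def IsAlmostArmendariz (R : Type*) [Ring R] : Prop :=
  ∀ f g : Polynomial R, f * g = 0 → ∀ i j : ℕ, f.coeff i * g.coeff j ∈ primeRadical R

lemma stronglyNilpotent_of_quotient {R : Type*} [Ring R]
    (I : TwoSidedIdeal R) (hI : (I : Set R) ⊆ primeRadical R) (x : R)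
    (hx : IsStronglyNilpotent (I.ringCon.mk' x)) : IsStronglyNilpotent x := by
  intro s hs0 hrec
  obtain ⟨n, hn⟩ := hx (fun k => I.ringCon.mk' (s k)) (by beta_reduce; rw [hs0])
    (fun k => by
      obtain ⟨r, hr⟩ := hrec k
      exact ⟨I.ringCon.mk' r, by beta_reduce; rw [hr]; simp⟩)
  have hsn : s n ∈ I := by
    rw [TwoSidedIdeal.mem_iff]
    have : (s n : I.ringCon.Quotient) = ((0 : R) : I.ringCon.Quotient) := by
      simpa using hn
    exact I.ringCon.eq.mp this
  obtain ⟨m, hm⟩ := hI hsn (fun k => s (n + k)) rfl (fun k => by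
    obtain ⟨r, hr⟩ := hrec (n + k)
    exact ⟨r, by beta_reduce; rw [← Nat.add_assoc, hr]⟩)
  exact ⟨n + m, hm⟩

/-- Let `I` be a two-sided ideal of `R` with `I ⊆ P(R)`.  If the quotient ring `R/I` is
almost Armendariz, then `R` is almost Armendariz. -/
theorem almostArmendariz_of_quotient_of_le_primeRadical {R : Type*} [Ring R]
    (I : TwoSidedIdeal R) (hI : (I : Set R) ⊆ primeRadical R)
    (h : IsAlmostArmendariz I.ringCon.Quotient) : IsAlmostArmendariz R := by
  intro f g hfg i j
  have h0 : f.map I.ringCon.mk' * g.map I.ringCon.mk' = 0 := by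
    rw [← Polynomial.map_mul, hfg, Polynomial.map_zero]
  have := h (f.map I.ringCon.mk') (g.map I.ringCon.mk') h0 i j
  simp only [Polynomial.coeff_map] at this
  exact stronglyNilpotent_of_quotient I hI _ (by simpa [primeRadical] using this)
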